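/- Let l, n > 0, q ≥ 2 be integers, let N = q^n(q^{n!} − 1), and let b ≥ 0 be a real number with b ∉ (1/N)·ℤ. For each integer m ≥ 0 define b_m := (q^m b − ⌊q^m b⌋) + min{ l − 1, ⌊q^m b⌋ }. Then b_0, b_1, …, b_n are n + 1 pairwise distinct real numbers, each lying in the interval [0, l]. -/

import Mathlib

/-- For `N = q^n(q^{n!} − 1)` and `b ≥ 0` with `b ∉ (1/N)·ℤ`, the numbers
`b_m := (q^m b − ⌊q^m b⌋) + min(l − 1, ⌊q^m b⌋)` for `m = 0, …, n` are pairwise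
distinct and lie in `[0, l]`. -/
theorem distinct_fractional_parts (l n q : ℕ) (hl : 0 < l) (hn : 0 < n) (hq : 2 ≤ q)
    (N : ℕ) (hN : N = q ^ n * (q ^ n.factorial - 1))
    (b : ℝ) (hb : 0 ≤ b) (hbN : ¬ ∃ k : ℤ, b = (k : ℝ) / (N : ℝ))
    (bseq : ℕ → ℝ)
    (hbseq : ∀ m : ℕ, bseq m =
      ((q : ℝ) ^ m * b - (⌊(q : ℝ) ^ m * b⌋ : ℝ)) +
        min ((l : ℝ) - 1) ((⌊(q : ℝ) ^ m * b⌋ : ℤ) : ℝ)) :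
    (∀ i ≤ n, ∀ j ≤ n, bseq i = bseq j → i = j) ∧
      ∀ m ≤ n, bseq m ∈ Set.Icc (0 : ℝ) (l : ℝ) := by
  have hq1 : 1 < q := hq
  have hqR : (1 : ℝ) ≤ (q : ℝ) := by exact_mod_cast hq1.le
  constructor
  · have key : ∀ i j, i < j → j ≤ n → bseq i ≠ bseq j := by
      intro i j hij hjn heq
      rw [hbseq i, hbseq j] at heq
      set x := (q : ℝ) ^ i * b with hx
      set y := (q : ℝ) ^ j * b with hy
      -- the two mins are casts of integers
      have hmin : ∀ z : ℝ, min ((l : ℝ) - 1) ((⌊z⌋ : ℤ) : ℝ) =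
          ((min ((l : ℤ) - 1) ⌊z⌋ : ℤ) : ℝ) := by
        intro z; push_cast; ring_nf
      rw [hmin x, hmin y] at heq
      -- fractional parts are equal
      have hfx : x - (⌊x⌋ : ℝ) = Int.fract x := (Int.self_sub_floor x).symm
      have hfy : y - (⌊y⌋ : ℝ) = Int.fract y := (Int.self_sub_floor y).symm
      rw [hfx, hfy] at heq
      have hdiff : Int.fract x - Int.fract y =
          ((min ((l : ℤ) - 1) ⌊y⌋ - min ((l : ℤ) - 1) ⌊x⌋ : ℤ) : ℝ) := by
        rw [Int.cast_sub]; linarith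
      have hz : (min ((l : ℤ) - 1) ⌊y⌋ - min ((l : ℤ) - 1) ⌊x⌋ : ℤ) = 0 := by
        have h1 := Int.fract_nonneg x
        have h2 := Int.fract_lt_one x
        have h3 := Int.fract_nonneg y
        have h4 := Int.fract_lt_one y
        have : |((min ((l : ℤ) - 1) ⌊y⌋ - min ((l : ℤ) - 1) ⌊x⌋ : ℤ) : ℝ)| < 1 := by
          rw [abs_lt]; constructor <;> [linarith [hdiff]; linarith [hdiff]]
        have : |(min ((l : ℤ) - 1) ⌊y⌋ - min ((l : ℤ) - 1) ⌊x⌋ : ℤ)| < 1 := by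
          exact_mod_cast this
        exact Int.abs_lt_one_iff.mp this
      have hfract : Int.fract x = Int.fract y := by
        have := hdiff; rw [hz] at this; push_cast at this; linarith
      -- so y - x is an integer
      have hKy : y - x = ((⌊y⌋ - ⌊x⌋ : ℤ) : ℝ) := by
        unfold Int.fract at hfract
        push_cast
        linarith
      set K : ℤ := ⌊y⌋ - ⌊x⌋ with hK
      -- D := q^j - q^i divides N
      have hle : q ^ i ≤ q ^ j := Nat.pow_le_pow_right (by omega) hij.le
      set D : ℕ := q ^ j - q ^ i with hD
      have hDfac : D = q ^ i * (q ^ (j - i) - 1) := by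
        rw [hD, Nat.mul_sub_one]
        rw [← pow_add]
        congr 1
        · congr 1; omega
      have hDdvd : D ∣ N := by
        rw [hDfac, hN]
        apply mul_dvd_mul
        · exact pow_dvd_pow q (by omega)
        · have hdvd : (j - i) ∣ n.factorial := Nat.dvd_factorial (by omega) (by omega)
          obtain ⟨e, he⟩ := hdvd
          have : q ^ n.factorial - 1 = (q ^ (j - i)) ^ e - 1 ^ e := by
            rw [← pow_mul, ← he, one_pow]
          rw [this]
          exact Nat.sub_dvd_pow_sub_pow _ 1 e
      obtain ⟨c, hc⟩ := hDdvd
      have hDpos : 0 < D := by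
        have : q ^ i < q ^ j := Nat.pow_lt_pow_right hq1 hij
        omega
      have hNpos : 0 < N := by
        rw [hN]
        have h1 : 0 < q ^ n := Nat.pow_pos (by omega)
        have h2 : 1 < q ^ n.factorial := Nat.one_lt_pow (Nat.factorial_ne_zero n) hq1
        exact Nat.mul_pos h1 (by omega)
      have hcpos : 0 < c := by
        rcases Nat.eq_zero_or_pos c with h | h
        · rw [h, mul_zero] at hc; omega
        · exact h
      -- b * D = K
      have hbD : b * (D : ℝ) = (K : ℝ) := by
        have : ((D : ℕ) : ℝ) = (q : ℝ) ^ j - (q : ℝ) ^ i := by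
          rw [hD]; push_cast [hle]; ring
        rw [this]
        rw [hx, hy] at hKy
        linarith
      apply hbN
      refine ⟨K * c, ?_⟩
      have hNR : (N : ℝ) = (D : ℝ) * (c : ℝ) := by exact_mod_cast hc
      rw [eq_div_iff (by positivity), hNR]
      push_cast
      rw [← mul_assoc, hbD]
    intro i hi j hj heq
    rcases lt_trichotomy i j with h | h | h
    · exact absurd heq (key i j h hj)
    · exact h
    · exact absurd heq.symm (key j i h hi)
  · intro m hm
    rw [hbseq m]
    set x := (q : ℝ) ^ m * b with hx
    have hx0 : 0 ≤ x := by positivity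
    have hfl : (0 : ℤ) ≤ ⌊x⌋ := Int.floor_nonneg.mpr hx0
    have h1 := Int.fract_nonneg x
    have h2 := Int.fract_lt_one x
    have hfx : x - (⌊x⌋ : ℝ) = Int.fract x := (Int.self_sub_floor x).symm
    rw [hfx]
    have hl1 : (1 : ℝ) ≤ (l : ℝ) := by exact_mod_cast hl
    constructor
    · have : (0 : ℝ) ≤ min ((l : ℝ) - 1) ((⌊x⌋ : ℤ) : ℝ) := by
        apply le_min <;> [linarith; exact_mod_cast hfl]
      linarith
    · have : min ((l : ℝ) - 1) ((⌊x⌋ : ℤ) : ℝ) ≤ (l : ℝ) - 1 := min_le_left _ _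
      linarith
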